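/- If α, β ∈ ℝⁿ satisfy α ≺ β (i.e., for each k, the sum of the k largest entries of α is at most that of β, with equality for k = n), then there exists a Hermitian matrix A ∈ Mₙ(ℂ) whose diagonal is α and whose eigenvalues (with multiplicity) are β. -/

import Mathlib

/-- The sum of the `k` largest entries of `α`: the supremum of the sums of `α`
over subsets of cardinality `k`. -/
noncomputable def kLargestSum {n : ℕ} (α : Fin n → ℝ) (k : ℕ) : ℝ :=
  sSup {x : ℝ | ∃ s : Finset (Fin n), s.card = k ∧ x = ∑ i ∈ s, α i}

/-- Vector majorization `α ≺ β`: for each `k` the sum of the `k` largest entries of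
`α` is at most that of `β`, with equality of the total sums. -/
def IsMajorizedBy {n : ℕ} (α β : Fin n → ℝ) : Prop :=
  (∀ k : ℕ, k ≤ n → kLargestSum α k ≤ kLargestSum β k) ∧ ∑ i, α i = ∑ i, β i


namespace HornAux
open Matrix Finset Polynomial


variable {N : ℕ}

noncomputable def psum (f : Fin N → ℝ) (m : ℕ) : ℝ :=
  ∑ i ∈ Finset.univ.filter (fun i : Fin N => (i : ℕ) < m), f i

lemma psum_eq_sum_ite (f : Fin N → ℝ) (m : ℕ) :
    psum f m = ∑ i : Fin N, if (i : ℕ) < m then f i else 0 := by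
  rw [psum, Finset.sum_filter]

lemma psum_zero (f : Fin N → ℝ) : psum f 0 = 0 := by simp [psum_eq_sum_ite]

lemma psum_succ (f : Fin N → ℝ) {m : ℕ} (hm : m < N) :
    psum f (m + 1) = psum f m + f ⟨m, hm⟩ := by
  rw [psum_eq_sum_ite, psum_eq_sum_ite]
  have h : ∀ i : Fin N, (if (i : ℕ) < m + 1 then f i else 0)
      = (if (i : ℕ) < m then f i else 0) + (if i = ⟨m, hm⟩ then f i else 0) := by
    intro i
    rcases lt_trichotomy (i : ℕ) m with h1 | h1 | h1
    · simp [h1, Nat.lt_succ_of_lt h1, Fin.ext_iff, h1.ne]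
    · simp [h1, Fin.ext_iff]
    · have h2 : ¬ ((i : ℕ) < m + 1) := by omega
      have h3 : ¬ ((i : ℕ) < m) := by omega
      simp [h2, h3, Fin.ext_iff, h1.ne']
  simp_rw [h, Finset.sum_add_distrib]
  congr 1
  simp

lemma psum_of_ge (f : Fin N → ℝ) {m : ℕ} (hm : N ≤ m) : psum f m = ∑ i, f i := by
  rw [psum_eq_sum_ite]
  apply Finset.sum_congr rfl
  intro i _
  simp [lt_of_lt_of_le i.isLt hm]

lemma sum_le_psum {g : Fin N → ℝ} (hg : Antitone g) :
    ∀ (m : ℕ) (s : Finset (Fin N)), s.card = m → ∑ i ∈ s, g i ≤ psum g m := by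
  intro m
  induction m with
  | zero => intro s hs; simp [Finset.card_eq_zero.mp hs, psum_zero]
  | succ m ih =>
    intro s hs
    have hsn : s.Nonempty := by rw [← Finset.card_pos, hs]; omega
    set a := s.max' hsn with ha
    have hmN : m < N := by
      have := s.card_le_univ
      simp only [hs, Finset.card_univ, Fintype.card_fin] at this
      omega
    have hsub : s ⊆ Finset.Iic a := fun x hx => Finset.mem_Iic.mpr (s.le_max' x hx)
    have hma : m ≤ (a : ℕ) := by
      have h1 := Finset.card_le_card hsub
      rw [hs, Fin.card_Iic] at h1
      omega
    have hga : g a ≤ g ⟨m, hmN⟩ := hg (by simp [Fin.le_def, hma])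
    have hmem : a ∈ s := s.max'_mem hsn
    have herase : (s.erase a).card = m := by rw [Finset.card_erase_of_mem hmem, hs]; omega
    calc ∑ i ∈ s, g i = g a + ∑ i ∈ s.erase a, g i := (Finset.add_sum_erase s g hmem).symm
      _ ≤ g ⟨m, hmN⟩ + psum g m := add_le_add hga (ih _ herase)
      _ = psum g (m + 1) := by rw [psum_succ g hmN]; ring

lemma exists_antitone_perm (f : Fin N → ℝ) : ∃ σ : Equiv.Perm (Fin N), Antitone (f ∘ σ) := by
  refine ⟨Tuple.sort (fun i => -f i), fun i j hij => ?_⟩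
  have := Tuple.monotone_sort (fun i => -f i) hij
  simpa using this

lemma filter_lt_card {m : ℕ} (hm : m ≤ N) :
    (Finset.univ.filter (fun i : Fin N => (i : ℕ) < m)).card = m := by
  have : Finset.univ.filter (fun i : Fin N => (i : ℕ) < m)
      = Finset.map (Fin.castLEEmb hm) Finset.univ := by
    ext i
    simp only [Finset.mem_filter, Finset.mem_univ, true_and, Finset.mem_map]
    constructor
    · intro hi
      exact ⟨⟨(i : ℕ), hi⟩, by simp [Fin.ext_iff]⟩
    · rintro ⟨j, -, rfl⟩
      simpa using j.isLt
  rw [this, Finset.card_map, Finset.card_univ, Fintype.card_fin]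

lemma exists_perm_of_multiset_eq {f g : Fin N → ℝ}
    (h : Finset.univ.val.map f = Finset.univ.val.map g) :
    ∃ σ : Equiv.Perm (Fin N), f ∘ σ = g := by
  have hp : (List.ofFn f).Perm (List.ofFn g) := by
    rw [← Multiset.coe_eq_coe, ← Fin.univ_val_map, ← Fin.univ_val_map]
    exact h
  have h1 : f ∘ Tuple.sort f = g ∘ Tuple.sort g := by
    apply List.ofFn_injective
    exact List.Perm.eq_of_sortedLE
      (Tuple.monotone_sort f).sortedLE_ofFn (Tuple.monotone_sort g).sortedLE_ofFn
      (((Tuple.sort f).ofFn_comp_perm f).trans (hp.trans ((Tuple.sort g).ofFn_comp_perm g).symm))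
  refine ⟨(Tuple.sort g).symm.trans (Tuple.sort f), funext fun x => ?_⟩
  have := congrFun h1 ((Tuple.sort g).symm x)
  simpa using this



lemma charpoly_conj {n : Type*} [Fintype n] [DecidableEq n] (P M Q : Matrix n n ℂ)
    (hPQ : P * Q = 1) : (P * M * Q).charpoly = M.charpoly := by
  have hmapPQ : P.map C * Q.map C = 1 := by
    rw [← Matrix.map_mul (f := (C : ℂ →+* ℂ[X])), hPQ]
    simp
  have hch : charmatrix (P * M * Q) = P.map C * charmatrix M * Q.map C := by
    rw [charmatrix, charmatrix]
    have h1 : (C : ℂ →+* ℂ[X]).mapMatrix (P * M * Q) = P.map C * M.map C * Q.map C := by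
      simp only [RingHom.mapMatrix_apply]
      rw [Matrix.map_mul (f := (C : ℂ →+* ℂ[X])), Matrix.map_mul (f := (C : ℂ →+* ℂ[X]))]
    rw [h1, RingHom.mapMatrix_apply]
    have hsc : ∀ A : Matrix n n ℂ[X], A * Matrix.scalar n (X : ℂ[X]) = Matrix.scalar n (X : ℂ[X]) * A := by
      intro A
      exact (Matrix.scalar_commute (X : ℂ[X]) (fun r => Commute.all _ _) A).symm
    rw [Matrix.mul_sub, Matrix.sub_mul, Matrix.mul_assoc]
    congr 1
    rw [Matrix.mul_assoc, ← hsc (Q.map C), ← Matrix.mul_assoc, hmapPQ, Matrix.one_mul]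
  rw [Matrix.charpoly, Matrix.charpoly, hch, Matrix.det_mul, Matrix.det_mul]
  have hdet : Matrix.det (P.map C) * Matrix.det (Q.map C) = 1 := by
    rw [← Matrix.det_mul, hmapPQ, Matrix.det_one]
  calc Matrix.det (P.map C) * (charmatrix M).det * (Q.map C).det
      = (charmatrix M).det * ((P.map C).det * (Q.map C).det) := by ring
    _ = (charmatrix M).det := by rw [hdet, mul_one]

lemma charpoly_diagC {n : ℕ} (d : Fin n → ℂ) :
    (Matrix.diagonal d).charpoly = ∏ i, (X - Polynomial.C (d i)) := by
  rw [Matrix.charpoly_of_upperTriangular _ (Matrix.blockTriangular_diagonal d)]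
  simp

lemma roots_charpoly_diag {n : ℕ} (d : Fin n → ℂ) :
    (Matrix.diagonal d).charpoly.roots = Finset.univ.val.map d := by
  rw [charpoly_diagC]
  have h : (∏ i, (X - Polynomial.C (d i)))
      = (Multiset.map (fun a => X - Polynomial.C a) (Finset.univ.val.map d)).prod := by
    rw [Multiset.map_map]; rfl
  rw [h, Polynomial.roots_multiset_prod_X_sub_C]

lemma eig_multiset {n : ℕ} {A : Matrix (Fin n) (Fin n) ℂ} (hA : A.IsHermitian)
    {W : Matrix (Fin n) (Fin n) ℂ} (hW : W * Wᴴ = 1) (γ : Fin n → ℝ)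
    (hAW : A = W * Matrix.diagonal (fun i => (γ i : ℂ)) * Wᴴ) :
    Finset.univ.val.map hA.eigenvalues = Finset.univ.val.map γ := by
  have h1 : A.charpoly = (Matrix.diagonal (fun i => (γ i : ℂ))).charpoly := by
    rw [hAW]; exact charpoly_conj _ _ _ hW
  have hVu : (hA.eigenvectorUnitary : Matrix (Fin n) (Fin n) ℂ) *
      star (hA.eigenvectorUnitary : Matrix (Fin n) (Fin n) ℂ) = 1 := by
    have hm := hA.eigenvectorUnitary.prop
    rw [Unitary.mem_iff] at hm
    exact hm.2
  have h2 : A.charpoly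
      = (Matrix.diagonal (RCLike.ofReal ∘ hA.eigenvalues : Fin n → ℂ)).charpoly := by
    conv_lhs => rw [hA.spectral_theorem]
    have := charpoly_conj (hA.eigenvectorUnitary : Matrix (Fin n) (Fin n) ℂ)
      (Matrix.diagonal (RCLike.ofReal ∘ hA.eigenvalues : Fin n → ℂ))
      (star (hA.eigenvectorUnitary : Matrix (Fin n) (Fin n) ℂ)) hVu
    exact this
  have h3 := roots_charpoly_diag (fun i => (γ i : ℂ))
  have h4 := roots_charpoly_diag (RCLike.ofReal ∘ hA.eigenvalues : Fin n → ℂ)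
  have h5 : Finset.univ.val.map (RCLike.ofReal ∘ hA.eigenvalues : Fin n → ℂ)
      = Finset.univ.val.map (fun i => (γ i : ℂ)) := by
    rw [← h3, ← h4, ← h1, ← h2]
  have h6 : Multiset.map (RCLike.ofReal : ℝ → ℂ) (Finset.univ.val.map hA.eigenvalues)
      = Multiset.map (RCLike.ofReal : ℝ → ℂ) (Finset.univ.val.map γ) := by
    rw [Multiset.map_map, Multiset.map_map]
    exact h5
  exact Multiset.map_injective RCLike.ofReal_injective h6



variable {N : ℕ}

def rotG (k k' : Fin N) (c s : ℝ) : Matrix (Fin N) (Fin N) ℝ :=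
  Matrix.of fun i j =>
    if i = k then (if j = k then c else if j = k' then s else 0)
    else if i = k' then (if j = k then -s else if j = k' then c else 0)
    else if j = i then 1 else 0

lemma sum_eq_pair {k k' : Fin N} (hkk' : k ≠ k') (f : Fin N → ℝ)
    (hf : ∀ l, l ≠ k → l ≠ k' → f l = 0) : ∑ l, f l = f k + f k' := by
  rw [← Finset.sum_subset (Finset.subset_univ {k, k'})]
  · rw [Finset.sum_pair hkk']
  · intro x _ hx
    simp only [Finset.mem_insert, Finset.mem_singleton, not_or] at hx
    exact hf x hx.1 hx.2

lemma rotG_conj {k k' : Fin N} (hkk' : k ≠ k') (c s : ℝ) (γ : Fin N → ℝ) (i j : Fin N) :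
    (rotG k k' c s * Matrix.diagonal γ * (rotG k k' c s)ᵀ) i j =
    if i = k then (if j = k then c*c*γ k + s*s*γ k' else if j = k' then c*s*(γ k' - γ k) else 0)
    else if i = k' then (if j = k then c*s*(γ k' - γ k) else if j = k' then s*s*γ k + c*c*γ k' else 0)
    else if j = i then γ i else 0 := by
  have hmul : (rotG k k' c s * Matrix.diagonal γ * (rotG k k' c s)ᵀ) i j
      = ∑ l, rotG k k' c s i l * γ l * rotG k k' c s j l := by
    rw [Matrix.mul_apply]
    apply Finset.sum_congr rfl
    intro l _
    rw [Matrix.transpose_apply, Matrix.mul_diagonal]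
  rw [hmul]
  rcases eq_or_ne i k with hi | hi
  · subst hi
    have hs : ∑ l, rotG i k' c s i l * γ l * rotG i k' c s j l
        = rotG i k' c s i i * γ i * rotG i k' c s j i
          + rotG i k' c s i k' * γ k' * rotG i k' c s j k' := by
      apply sum_eq_pair hkk'
      intro l hl1 hl2
      have h0 : rotG i k' c s i l = 0 := by simp [rotG, hl1, hl2]
      rw [h0]; ring
    rw [hs]
    rcases eq_or_ne j i with hj | hj
    · subst hj; simp [rotG, hkk', hkk'.symm]; ring
    · rcases eq_or_ne j k' with hj' | hj'
      · subst hj'; simp [rotG, hkk', hkk'.symm, hj, Ne.symm hj]; ring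
      · simp [rotG, hkk', hkk'.symm, hj, Ne.symm hj, hj', Ne.symm hj']
  · rcases eq_or_ne i k' with hi' | hi'
    · subst hi'
      have hs : ∑ l, rotG k i c s i l * γ l * rotG k i c s j l
          = rotG k i c s i k * γ k * rotG k i c s j k
            + rotG k i c s i i * γ i * rotG k i c s j i := by
        apply sum_eq_pair hkk'
        intro l hl1 hl2
        have h0 : rotG k i c s i l = 0 := by simp [rotG, hkk'.symm, hl1, hl2]
        rw [h0]; ring
      rw [hs]
      rcases eq_or_ne j k with hj | hj
      · subst hj; simp [rotG, hkk', hkk'.symm]; ring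
      · rcases eq_or_ne j i with hj' | hj'
        · subst hj'; simp [rotG, hkk', hkk'.symm]; ring
        · simp [rotG, hkk', hkk'.symm, hj, Ne.symm hj, hj', Ne.symm hj']
    · have hs : ∑ l, rotG k k' c s i l * γ l * rotG k k' c s j l
          = rotG k k' c s i i * γ i * rotG k k' c s j i := by
        apply Finset.sum_eq_single i
        · intro l _ hl
          have h0 : rotG k k' c s i l = 0 := by simp [rotG, hi, hi', hl]
          rw [h0]; ring
        · intro h; exact absurd (Finset.mem_univ i) h
      rw [hs]
      simp only [rotG, Matrix.of_apply, hi, hi', if_false, if_pos rfl]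
      rcases eq_or_ne j i with hj | hj
      · subst hj; simp [hi, hi']
      · rcases eq_or_ne j k with hjk | hjk
        · subst hjk; simp [hi, Ne.symm hi, hj, Ne.symm hj, hkk']
        · rcases eq_or_ne j k' with hjk' | hjk'
          · subst hjk'; simp [hi', Ne.symm hi', hj, Ne.symm hj, hjk, Ne.symm hjk]
          · simp [hjk, hjk', hj, Ne.symm hj]

lemma rotG_orth {k k' : Fin N} (hkk' : k ≠ k') {c s : ℝ} (hcs : c*c + s*s = 1) :
    rotG k k' c s * (rotG k k' c s)ᵀ = 1 := by
  have h1 : rotG k k' c s * (rotG k k' c s)ᵀ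
      = rotG k k' c s * Matrix.diagonal (fun _ => (1:ℝ)) * (rotG k k' c s)ᵀ := by
    rw [Matrix.diagonal_one, Matrix.mul_one]
  rw [h1]
  ext i j
  rw [rotG_conj hkk']
  rcases eq_or_ne i k with hi | hi
  · subst hi
    rcases eq_or_ne j i with hj | hj
    · subst hj; simp [Matrix.one_apply, hcs]
    · rcases eq_or_ne j k' with hj' | hj'
      · subst hj'; simp [Matrix.one_apply, hkk', hkk'.symm]
      · simp [Matrix.one_apply, hj, Ne.symm hj, hj', Ne.symm hj']
  · rcases eq_or_ne i k' with hi' | hi'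
    · subst hi'
      rcases eq_or_ne j i with hj | hj
      · subst hj; simp [Matrix.one_apply, hi]; linarith
      · rcases eq_or_ne j k with hjk | hjk
        · subst hjk; simp [Matrix.one_apply, hj, Ne.symm hj]
        · simp [Matrix.one_apply, hi, hj, Ne.symm hj, hjk, Ne.symm hjk]
    · rcases eq_or_ne j i with hj | hj
      · subst hj; simp [Matrix.one_apply, hi, hi']
      · simp [Matrix.one_apply, hi, hi', hj, Ne.symm hj]

def borderW (V : Matrix (Fin N) (Fin N) ℝ) : Matrix (Fin (N+1)) (Fin (N+1)) ℝ :=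
  Matrix.of fun i j =>
    if hi : i = 0 then (if j = 0 then 1 else 0)
    else if hj : j = 0 then 0 else V (i.pred hi) (j.pred hj)

@[simp] lemma borderW_zero_zero (V : Matrix (Fin N) (Fin N) ℝ) : borderW V 0 0 = 1 := by
  simp [borderW]

@[simp] lemma borderW_zero_succ (V : Matrix (Fin N) (Fin N) ℝ) (q : Fin N) :
    borderW V 0 q.succ = 0 := by
  simp [borderW, (Fin.succ_ne_zero q)]

@[simp] lemma borderW_succ_zero (V : Matrix (Fin N) (Fin N) ℝ) (p : Fin N) :
    borderW V p.succ 0 = 0 := by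
  simp [borderW, (Fin.succ_ne_zero p)]

@[simp] lemma borderW_succ_succ (V : Matrix (Fin N) (Fin N) ℝ) (p q : Fin N) :
    borderW V p.succ q.succ = V p q := by
  simp [borderW, (Fin.succ_ne_zero p), (Fin.succ_ne_zero q)]

lemma borderW_orth {V : Matrix (Fin N) (Fin N) ℝ} (hV : V * Vᵀ = 1) :
    borderW V * (borderW V)ᵀ = 1 := by
  ext i j
  have hmul : (borderW V * (borderW V)ᵀ) i j = ∑ l, borderW V i l * borderW V j l := by
    simp [Matrix.mul_apply, Matrix.transpose_apply]
  rw [hmul]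
  induction i using Fin.cases with
  | zero =>
    induction j using Fin.cases with
    | zero => simp [Fin.sum_univ_succ, Matrix.one_apply]
    | succ q => simp [Fin.sum_univ_succ, Matrix.one_apply, (Fin.succ_ne_zero q).symm]
  | succ p =>
    induction j using Fin.cases with
    | zero => simp [Fin.sum_univ_succ, Matrix.one_apply, Fin.succ_ne_zero p]
    | succ q =>
      have hVpq : (V * Vᵀ) p q = ∑ l, V p l * V q l := by
        simp [Matrix.mul_apply, Matrix.transpose_apply]
      have h1 : (1 : Matrix (Fin (N+1)) (Fin (N+1)) ℝ) p.succ q.succ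
          = (1 : Matrix (Fin N) (Fin N) ℝ) p q := by
        simp [Matrix.one_apply, Fin.succ_inj]
      rw [Fin.sum_univ_succ]
      simp only [borderW_succ_zero, borderW_succ_succ, zero_mul, zero_add]
      rw [h1, ← hV, hVpq]

lemma borderW_conj_zero (V : Matrix (Fin N) (Fin N) ℝ) (X : Matrix (Fin (N+1)) (Fin (N+1)) ℝ) :
    (borderW V * X * (borderW V)ᵀ) 0 0 = X 0 0 := by
  have h : (borderW V * X * (borderW V)ᵀ) 0 0
      = ∑ m, (∑ l, borderW V 0 l * X l m) * borderW V 0 m := by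
    simp [Matrix.mul_apply, Matrix.transpose_apply]
  rw [h, Fin.sum_univ_succ]
  simp [Fin.sum_univ_succ]

lemma borderW_conj_succ (V : Matrix (Fin N) (Fin N) ℝ)
    (X : Matrix (Fin (N+1)) (Fin (N+1)) ℝ) (Y : Matrix (Fin N) (Fin N) ℝ)
    (hXY : ∀ p q : Fin N, X p.succ q.succ = Y p q) (p q : Fin N) :
    (borderW V * X * (borderW V)ᵀ) p.succ q.succ = (V * Y * Vᵀ) p q := by
  have h : (borderW V * X * (borderW V)ᵀ) p.succ q.succ
      = ∑ m, (∑ l, borderW V p.succ l * X l m) * borderW V q.succ m := by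
    simp [Matrix.mul_apply, Matrix.transpose_apply]
  have h2 : (V * Y * Vᵀ) p q = ∑ m, (∑ l, V p l * Y l m) * V q m := by
    simp [Matrix.mul_apply, Matrix.transpose_apply]
  rw [h, h2, Fin.sum_univ_succ]
  simp only [borderW_succ_zero, borderW_succ_succ, mul_zero, zero_add]
  apply Finset.sum_congr rfl
  intro m _
  congr 1
  rw [Fin.sum_univ_succ]
  simp only [borderW_succ_zero, borderW_succ_succ, zero_mul, zero_add]
  exact Finset.sum_congr rfl (fun l _ => by rw [hXY])

lemma key : ∀ (n : ℕ) (a b : Fin n → ℝ), Antitone a → Antitone b →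
    (∀ m : ℕ, psum a m ≤ psum b m) → (∑ i, a i = ∑ i, b i) →
    ∃ U : Matrix (Fin n) (Fin n) ℝ, U * Uᵀ = 1 ∧
      ∀ i, (U * Matrix.diagonal b * Uᵀ) i i = a i := by
  intro n
  induction n with
  | zero =>
    intro a b _ _ _ _
    exact ⟨1, by simp, fun i => i.elim0⟩
  | succ n ih =>
    intro a b ha hb hps hsum
    by_cases hlast : a 0 ≤ b (Fin.last n)
    · -- then a = b entrywise
      have hle : ∀ i, a i ≤ b i := fun i =>
        le_trans (ha (Fin.zero_le i)) (le_trans hlast (hb (Fin.le_last i)))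
      have hab : ∀ i ∈ Finset.univ, a i = b i :=
        (Finset.sum_eq_sum_iff_of_le (fun i _ => hle i)).mp hsum
      refine ⟨1, by simp, fun i => ?_⟩
      have h1 : ((1 : Matrix (Fin (n+1)) (Fin (n+1)) ℝ) * Matrix.diagonal b
          * (1 : Matrix (Fin (n+1)) (Fin (n+1)) ℝ)ᵀ) i i = b i := by
        simp
      rw [h1]
      exact (hab i (Finset.mem_univ i)).symm
    · push_neg at hlast
      have h01 : a 0 ≤ b 0 := by
        have h := hps 1
        rw [psum_succ a (Nat.succ_pos n), psum_succ b (Nat.succ_pos n), psum_zero, psum_zero] at h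
        simpa using h
      have hKne : (Finset.univ.filter (fun i : Fin (n+1) => a 0 ≤ b i)).Nonempty :=
        ⟨0, by simp [h01]⟩
      obtain ⟨k, hkmem, hkub⟩ := Finset.exists_max_image
        (Finset.univ.filter (fun i : Fin (n+1) => a 0 ≤ b i)) id hKne
      have hk : a 0 ≤ b k := (Finset.mem_filter.mp hkmem).2
      have hkn : (k : ℕ) < n := by
        rcases lt_or_eq_of_le (Nat.lt_succ_iff.mp k.isLt) with h | h
        · exact h
        · exfalso
          have hkl : k = Fin.last n := Fin.ext h
          rw [hkl] at hk
          linarith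
      set k' : Fin (n+1) := ⟨(k:ℕ)+1, by omega⟩ with hk'def
      have hk'val : (k' : ℕ) = (k : ℕ) + 1 := rfl
      have hkk' : k ≠ k' := by
        simp only [ne_eq, Fin.ext_iff, hk'val]; omega
      have hkltk' : k < k' := by
        rw [Fin.lt_def, hk'val]; omega
      have hk' : b k' < a 0 := by
        by_contra hcon
        push_neg at hcon
        have hmem : k' ∈ Finset.univ.filter (fun i : Fin (n+1) => a 0 ≤ b i) := by
          simp [hcon]
        have hle := hkub k' hmem
        simp only [id] at hle
        exact absurd hle (not_le.mpr hkltk')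
      set p := b k with hp
      set q := b k' with hq
      have hpq : q < p := lt_of_lt_of_le hk' hk
      have hne : p - q ≠ 0 := by linarith
      set c := Real.sqrt ((a 0 - q) / (p - q)) with hc
      set s := Real.sqrt ((p - a 0) / (p - q)) with hs
      have hc2 : c * c = (a 0 - q) / (p - q) :=
        Real.mul_self_sqrt (div_nonneg (by linarith) (by linarith))
      have hs2 : s * s = (p - a 0) / (p - q) :=
        Real.mul_self_sqrt (div_nonneg (by linarith) (by linarith))
      have hcs : c * c + s * s = 1 := by
        rw [hc2, hs2, ← add_div, div_eq_one_iff_eq hne]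
        ring
      have h11 : c*c*p + s*s*q = a 0 := by
        rw [hc2, hs2, div_mul_eq_mul_div, div_mul_eq_mul_div, ← add_div, div_eq_iff hne]
        ring
      set c' := p + q - a 0 with hc'def
      have h22 : s*s*p + c*c*q = c' := by
        rw [hc2, hs2, div_mul_eq_mul_div, div_mul_eq_mul_div, ← add_div, div_eq_iff hne,
          hc'def]
        ring
      have hGorth : rotG k k' c s * (rotG k k' c s)ᵀ = 1 := rotG_orth hkk' hcs
      have hMuv : ∀ u v, (rotG k k' c s * Matrix.diagonal b * (rotG k k' c s)ᵀ) u v =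
          if u = k then (if v = k then c*c*b k + s*s*b k' else if v = k' then c*s*(b k' - b k) else 0)
          else if u = k' then (if v = k then c*s*(b k' - b k) else if v = k' then s*s*b k + c*c*b k' else 0)
          else if v = u then b u else 0 := fun u v => rotG_conj hkk' c s b u v
      set M := rotG k k' c s * Matrix.diagonal b * (rotG k k' c s)ᵀ with hMdef
      set σ' := (Fin.cycleRange k).symm with hσdef
      have hσ0 : σ' 0 = k := by
        rw [hσdef, Equiv.symm_apply_eq, Fin.cycleRange_self]
      have hσlt : ∀ x : Fin n, (x:ℕ) < (k:ℕ) → σ' x.succ = x.castSucc := by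
        intro x hx
        rw [hσdef, Equiv.symm_apply_eq, Fin.cycleRange_of_lt (by rw [Fin.lt_def]; simpa using hx)]
        exact (Fin.coeSucc_eq_succ).symm
      have hσeq : ∀ x : Fin n, (x:ℕ) = (k:ℕ) → σ' x.succ = k' := by
        intro x hx
        rw [hσdef, Equiv.symm_apply_eq, Fin.cycleRange_of_gt hkltk']
        simp only [Fin.ext_iff, Fin.val_succ, hk'val]
        omega
      have hσgt : ∀ x : Fin n, (k:ℕ) < (x:ℕ) → σ' x.succ = x.succ := by
        intro x hx
        rw [hσdef, Equiv.symm_apply_eq, Fin.cycleRange_of_gt (by rw [Fin.lt_def, Fin.val_succ]; omega)]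
      have hσne_k : ∀ x : Fin n, σ' x.succ ≠ k := by
        intro x hcon
        have h2 : σ' x.succ = σ' 0 := by rw [hσ0, hcon]
        have := σ'.injective h2
        exact Fin.succ_ne_zero x this
      set a' : Fin n → ℝ := fun x => a x.succ with ha'def
      set b' : Fin n → ℝ := fun x =>
        if (x:ℕ) < (k:ℕ) then b x.castSucc else if (x:ℕ) = (k:ℕ) then c' else b x.succ with hb'def
      -- entries of the reindexed matrix
      have hX00 : M.submatrix σ' σ' 0 0 = a 0 := by
        rw [Matrix.submatrix_apply, hσ0, hMuv]
        simp [← hp, ← hq, h11]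
      have hXsucc : ∀ x y : Fin n, M.submatrix σ' σ' x.succ y.succ = Matrix.diagonal b' x y := by
        intro x y
        rw [Matrix.submatrix_apply]
        rcases lt_trichotomy ((x:ℕ)) ((k:ℕ)) with hx | hx | hx
        · have hux : σ' x.succ = x.castSucc := hσlt x hx
          have h1 : x.castSucc ≠ k := by
            simp only [ne_eq, Fin.ext_iff, Fin.coe_castSucc]; omega
          have h2 : x.castSucc ≠ k' := by
            simp only [ne_eq, Fin.ext_iff, Fin.coe_castSucc, hk'val]; omega
          rcases lt_trichotomy ((y:ℕ)) ((k:ℕ)) with hy | hy | hy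
          · have huy : σ' y.succ = y.castSucc := hσlt y hy
            rw [hux, huy, hMuv]
            rcases eq_or_ne x y with rfl | hxy
            · simp [h1, h2, Matrix.diagonal_apply_eq, hb'def, hx]
            · have h3 : ¬ (y.castSucc = x.castSucc) := by
                simp only [Fin.ext_iff, Fin.coe_castSucc]
                intro hc; exact hxy (Fin.ext hc).symm
              simp [h1, h2, h3, Matrix.diagonal_apply_ne _ hxy]
          · have huy : σ' y.succ = k' := hσeq y hy
            rw [hux, huy, hMuv]
            have hxy : x ≠ y := by intro hc; rw [hc, hy] at hx; exact lt_irrefl _ hx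
            simp [h1, h2, Ne.symm h2, Matrix.diagonal_apply_ne _ hxy]
          · have huy : σ' y.succ = y.succ := hσgt y hy
            rw [hux, huy, hMuv]
            have hy1 : y.succ ≠ k := by
              simp only [ne_eq, Fin.ext_iff, Fin.val_succ]; omega
            have hy2 : y.succ ≠ k' := by
              simp only [ne_eq, Fin.ext_iff, Fin.val_succ, hk'val]; omega
            have h3 : ¬ (y.succ = x.castSucc) := by
              simp only [Fin.ext_iff, Fin.val_succ, Fin.coe_castSucc]; omega
            have hxy : x ≠ y := by intro hc; rw [hc] at hx; omega
            simp [h1, h2, hy1, hy2, h3, Matrix.diagonal_apply_ne _ hxy]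
        · have hux : σ' x.succ = k' := hσeq x hx
          rcases lt_trichotomy ((y:ℕ)) ((k:ℕ)) with hy | hy | hy
          · have huy : σ' y.succ = y.castSucc := hσlt y hy
            rw [hux, huy, hMuv]
            have h1 : ¬ (y.castSucc = k) := by
              simp only [Fin.ext_iff, Fin.coe_castSucc]; omega
            have h2 : ¬ (y.castSucc = k') := by
              simp only [Fin.ext_iff, Fin.coe_castSucc, hk'val]; omega
            have hxy : x ≠ y := by intro hc; rw [← hc, hx] at hy; exact lt_irrefl _ hy
            simp [hkk'.symm, h1, h2, Matrix.diagonal_apply_ne _ hxy]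
          · have huy : σ' y.succ = k' := hσeq y hy
            have hxy : x = y := by
              have : (x:ℕ) = (y:ℕ) := by omega
              exact Fin.ext this
            subst hxy
            rw [hux, hMuv]
            simp [hkk'.symm, Matrix.diagonal_apply_eq, hb'def, hx, ← hp, ← hq, h22]
          · have huy : σ' y.succ = y.succ := hσgt y hy
            rw [hux, huy, hMuv]
            have h1 : ¬ (y.succ = k) := by
              simp only [Fin.ext_iff, Fin.val_succ]; omega
            have h2 : ¬ (y.succ = k') := by
              simp only [Fin.ext_iff, Fin.val_succ, hk'val]; omega
            have hxy : x ≠ y := by intro hc; rw [hc] at hx; omega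
            simp [hkk'.symm, h1, h2, Matrix.diagonal_apply_ne _ hxy]
        · have hux : σ' x.succ = x.succ := hσgt x hx
          have hx1 : x.succ ≠ k := by
            simp only [ne_eq, Fin.ext_iff, Fin.val_succ]; omega
          have hx2 : x.succ ≠ k' := by
            simp only [ne_eq, Fin.ext_iff, Fin.val_succ, hk'val]; omega
          rcases lt_trichotomy ((y:ℕ)) ((k:ℕ)) with hy | hy | hy
          · have huy : σ' y.succ = y.castSucc := hσlt y hy
            rw [hux, huy, hMuv]
            have h3 : ¬ (y.castSucc = x.succ) := by
              simp only [Fin.ext_iff, Fin.coe_castSucc, Fin.val_succ]; omega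
            have hxy : x ≠ y := by intro hc; rw [hc] at hx; omega
            simp [hx1, hx2, h3, Matrix.diagonal_apply_ne _ hxy]
          · have huy : σ' y.succ = k' := hσeq y hy
            rw [hux, huy, hMuv]
            have hxy : x ≠ y := by intro hc; rw [hc, hy] at hx; exact lt_irrefl _ hx
            simp [hx1, hx2, Ne.symm hx2, Matrix.diagonal_apply_ne _ hxy]
          · have huy : σ' y.succ = y.succ := hσgt y hy
            rw [hux, huy, hMuv]
            rcases eq_or_ne x y with rfl | hxy
            · have hn1 : ¬ (x:ℕ) < (k:ℕ) := by omega
              have hn2 : ¬ (x:ℕ) = (k:ℕ) := by omega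
              simp [hx1, hx2, Matrix.diagonal_apply_eq, hb'def, hn1, hn2]
            · have h3 : ¬ (y.succ = x.succ) := fun hc => (Ne.symm hxy) (Fin.succ_injective n hc)
              simp [hx1, hx2, h3, Matrix.diagonal_apply_ne _ hxy]
      -- monotonicity of a', b'
      have ha'anti : Antitone a' := by
        intro x y hxy
        apply ha
        rw [Fin.le_def, Fin.val_succ, Fin.val_succ]
        have h := Fin.le_def.mp hxy
        omega
      have hcsle : ∀ x : Fin n, x.castSucc ≤ x.succ := by
        intro x
        rw [Fin.le_def, Fin.coe_castSucc, Fin.val_succ]; omega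
      have hb'succ_le : ∀ x : Fin n, b x.succ ≤ b' x := by
        intro x
        rw [hb'def]
        rcases lt_trichotomy ((x:ℕ)) ((k:ℕ)) with hx | hx | hx
        · simp only [hx, if_true]
          exact hb (hcsle x)
        · simp only [hx, lt_irrefl, if_false, if_true]
          have hxs : x.succ = k' := by
            simp only [Fin.ext_iff, Fin.val_succ, hk'val]; omega
          rw [hxs, ← hq, hc'def]
          linarith
        · have hn1 : ¬ (x:ℕ) < (k:ℕ) := by omega
          have hn2 : ¬ (x:ℕ) = (k:ℕ) := by omega
          simp only [hn1, hn2, if_false]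
          exact le_refl _
      have hb'le_cast : ∀ x : Fin n, b' x ≤ b x.castSucc := by
        intro x
        rw [hb'def]
        rcases lt_trichotomy ((x:ℕ)) ((k:ℕ)) with hx | hx | hx
        · simp only [hx, if_true]
          exact le_refl _
        · simp only [hx, lt_irrefl, if_false, if_true]
          have hxs : x.castSucc = k := by
            simp only [Fin.ext_iff, Fin.coe_castSucc]; omega
          rw [hxs, ← hp, hc'def]
          linarith
        · have hn1 : ¬ (x:ℕ) < (k:ℕ) := by omega
          have hn2 : ¬ (x:ℕ) = (k:ℕ) := by omega
          simp only [hn1, hn2, if_false]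
          exact hb (hcsle x)
      have hb'anti : Antitone b' := by
        intro x y hxy
        rcases eq_or_lt_of_le hxy with rfl | hlt
        · exact le_refl _
        · have hstep : x.succ ≤ y.castSucc := by
            rw [Fin.le_def, Fin.val_succ, Fin.coe_castSucc]
            have h := Fin.lt_def.mp hlt
            omega
          calc b' y ≤ b y.castSucc := hb'le_cast y
            _ ≤ b x.succ := hb hstep
            _ ≤ b' x := hb'succ_le x
      -- partial sums
      have hpa' : ∀ m : ℕ, psum a' m = psum a (m+1) - a 0 := by
        intro m
        rw [psum_eq_sum_ite, psum_eq_sum_ite, Fin.sum_univ_succ]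
        simp only [Fin.val_zero, Nat.zero_lt_succ, if_true, Fin.val_succ]
        have hcong : ∀ x : Fin n, (if (x:ℕ) + 1 < m + 1 then a x.succ else 0)
            = (if (x:ℕ) < m then a' x else 0) := by
          intro x
          rw [ha'def]
          simp [Nat.add_lt_add_iff_right]
        rw [Finset.sum_congr rfl (fun x _ => hcong x)]
        ring
      have hpb'le : ∀ m : ℕ, m ≤ (k:ℕ) → psum b' m = psum b m := by
        intro m hm
        rw [psum_eq_sum_ite, psum_eq_sum_ite,
          Fin.sum_univ_castSucc (f := fun i : Fin (n+1) => if (i:ℕ) < m then b i else 0)]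
        have hnm : ¬ ((Fin.last n : Fin (n+1)) : ℕ) < m := by
          rw [Fin.val_last]; omega
        rw [if_neg hnm, add_zero]
        apply Finset.sum_congr rfl
        intro x _
        have hcv : ((x.castSucc : Fin (n+1)):ℕ) = (x:ℕ) := rfl
        rw [hcv]
        rcases lt_or_ge ((x:ℕ)) m with hxm | hxm
        · have hxk : (x:ℕ) < (k:ℕ) := by omega
          simp [hxm, hb'def, hxk]
        · simp [not_lt.mpr hxm]
      have hpb'gt : ∀ m : ℕ, (k:ℕ) < m → psum b' m = psum b (m+1) - a 0 := by
        intro m hm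
        induction m, hm using Nat.le_induction with
        | base =>
          have hbk : b' ⟨(k:ℕ), hkn⟩ = c' := by rw [hb'def]; simp
          have h1 : psum b' ((k:ℕ)+1) = psum b' (k:ℕ) + c' := by
            rw [psum_succ b' hkn, hbk]
          have h2 : psum b ((k:ℕ)+1+1) = psum b (k:ℕ) + p + q := by
            rw [psum_succ b (by omega : (k:ℕ)+1 < n+1), psum_succ b (by omega : (k:ℕ) < n+1)]
          rw [h1, h2, hpb'le (k:ℕ) le_rfl, hc'def]
          ring
        | succ m hm ihm =>
          by_cases hmn : m < n
          · rw [psum_succ b' hmn, psum_succ b (by omega : m+1 < n+1), ihm]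
            have e1 : b' ⟨m, hmn⟩ = b ⟨m+1, by omega⟩ := by
              rw [hb'def]
              simp only [(by simp; omega : ¬ (((⟨m, hmn⟩ : Fin n)):ℕ) < (k:ℕ)),
                (by simp; omega : ¬ (((⟨m, hmn⟩ : Fin n)):ℕ) = (k:ℕ)), if_false]
              congr 1
            rw [e1]
            ring
          · have h1 : psum b' (m+1) = psum b' m := by
              rw [psum_of_ge b' (by omega), psum_of_ge b' (by omega)]
            have h2 : psum b (m+1+1) = psum b (m+1) := by
              rw [psum_of_ge b (by omega), psum_of_ge b (by omega)]
            rw [h1, h2, ihm]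
      have hps' : ∀ m : ℕ, psum a' m ≤ psum b' m := by
        intro m
        rcases le_or_gt m (k:ℕ) with hm | hm
        · rw [psum, psum]
          apply Finset.sum_le_sum
          intro x hx
          rw [Finset.mem_filter] at hx
          have hxm : (x:ℕ) < m := hx.2
          have hxk : (x:ℕ) < (k:ℕ) := by omega
          have hbx : b' x = b x.castSucc := by rw [hb'def]; simp [hxk]
          rw [hbx, ha'def]
          calc a x.succ ≤ a 0 := ha (Fin.zero_le _)
            _ ≤ b k := hk
            _ ≤ b x.castSucc := hb (by rw [Fin.le_def, Fin.coe_castSucc]; omega)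
        · rw [hpa' m, hpb'gt m hm]
          linarith [hps (m+1)]
      have hsum' : ∑ x, a' x = ∑ x, b' x := by
        have h1 : psum a' n = psum a (n+1) - a 0 := hpa' n
        have h2 : psum b' n = psum b (n+1) - a 0 := hpb'gt n (by omega)
        rw [psum_of_ge a' le_rfl, psum_of_ge a (by omega)] at h1
        rw [psum_of_ge b' le_rfl, psum_of_ge b (by omega)] at h2
        rw [h1, h2, hsum]
      obtain ⟨V, hVorth, hVdiag⟩ := ih a' b' ha'anti hb'anti hps' hsum'
      -- assemble
      have hsub1 : (1 : Matrix (Fin (n+1)) (Fin (n+1)) ℝ).submatrix ⇑σ' ⇑σ' = 1 := by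
        ext i j
        simp [Matrix.submatrix_apply, Matrix.one_apply, σ'.injective.eq_iff]
      have hG1 : (rotG k k' c s).submatrix ⇑σ' id * (rotG k k' c s)ᵀ.submatrix id ⇑σ' = 1 := by
        have h := Matrix.submatrix_mul_equiv (rotG k k' c s) (rotG k k' c s)ᵀ
          (⇑σ') (Equiv.refl (Fin (n+1))) (⇑σ')
        simp only [Equiv.coe_refl] at h
        rw [h, hGorth, hsub1]
      have e1 : ((rotG k k' c s).submatrix ⇑σ' id) * Matrix.diagonal b
          = ((rotG k k' c s) * Matrix.diagonal b).submatrix ⇑σ' id := by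
        have h := Matrix.submatrix_mul_equiv (rotG k k' c s) (Matrix.diagonal b)
          (⇑σ') (Equiv.refl (Fin (n+1))) id
        simp only [Equiv.coe_refl, Matrix.submatrix_id_id] at h
        exact h
      have e2 : ((rotG k k' c s) * Matrix.diagonal b).submatrix ⇑σ' id
            * (rotG k k' c s)ᵀ.submatrix id ⇑σ'
          = M.submatrix ⇑σ' ⇑σ' := by
        have h := Matrix.submatrix_mul_equiv ((rotG k k' c s) * Matrix.diagonal b)
          (rotG k k' c s)ᵀ (⇑σ') (Equiv.refl (Fin (n+1))) (⇑σ')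
        simp only [Equiv.coe_refl] at h
        rw [h]
      refine ⟨borderW V * ((rotG k k' c s).submatrix ⇑σ' id), ?_, ?_⟩
      · rw [Matrix.transpose_mul, Matrix.transpose_submatrix, ← Matrix.mul_assoc,
          Matrix.mul_assoc (borderW V), hG1, Matrix.mul_one]
        exact borderW_orth hVorth
      · intro i
        have hdecomp : borderW V * ((rotG k k' c s).submatrix ⇑σ' id) * Matrix.diagonal b
              * (borderW V * ((rotG k k' c s).submatrix ⇑σ' id))ᵀ
            = borderW V * (M.submatrix ⇑σ' ⇑σ') * (borderW V)ᵀ := by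
          rw [Matrix.transpose_mul, Matrix.transpose_submatrix]
          calc borderW V * (rotG k k' c s).submatrix ⇑σ' id * Matrix.diagonal b
                * ((rotG k k' c s)ᵀ.submatrix id ⇑σ' * (borderW V)ᵀ)
              = borderW V * (((rotG k k' c s).submatrix ⇑σ' id * Matrix.diagonal b)
                * (rotG k k' c s)ᵀ.submatrix id ⇑σ') * (borderW V)ᵀ := by
                simp only [Matrix.mul_assoc]
            _ = borderW V * (M.submatrix ⇑σ' ⇑σ') * (borderW V)ᵀ := by
                rw [e1, e2]
        rw [hdecomp]
        induction i using Fin.cases with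
        | zero => rw [borderW_conj_zero, hX00]
        | succ x =>
          rw [borderW_conj_succ V _ (Matrix.diagonal b') hXsucc x x]
          exact hVdiag x

lemma kLargestSum_eq {n : ℕ} (α : Fin n → ℝ) (σ : Equiv.Perm (Fin n))
    (hσ : Antitone (α ∘ σ)) {m : ℕ} (hm : m ≤ n) :
    kLargestSum α m = psum (α ∘ σ) m := by
  unfold kLargestSum
  apply IsGreatest.csSup_eq
  constructor
  · refine ⟨(Finset.univ.filter (fun i : Fin n => (i:ℕ) < m)).image σ, ?_, ?_⟩
    · rw [Finset.card_image_of_injective _ σ.injective, filter_lt_card hm]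
    · rw [Finset.sum_image (fun x _ y _ h => σ.injective h)]
      rfl
  · rintro x ⟨s, hcard, rfl⟩
    have h1 : ∑ i ∈ s, α i = ∑ j ∈ s.image ⇑σ.symm, (α ∘ σ) j := by
      rw [Finset.sum_image (fun x _ y _ h => σ.symm.injective h)]
      apply Finset.sum_congr rfl
      intro j _
      simp
    rw [h1]
    exact sum_le_psum hσ m _
      (by rw [Finset.card_image_of_injective _ σ.symm.injective, hcard])

end HornAux

open Matrix in

theorem horn_theorem {n : ℕ} (α β : Fin n → ℝ) (h : IsMajorizedBy α β) :
    ∃ (A : Matrix (Fin n) (Fin n) ℂ) (hA : A.IsHermitian),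
      (∀ i, A i i = (α i : ℂ)) ∧ ∃ σ : Equiv.Perm (Fin n), hA.eigenvalues ∘ σ = β := by
  classical
  obtain ⟨πa, hπa⟩ := HornAux.exists_antitone_perm α
  obtain ⟨πb, hπb⟩ := HornAux.exists_antitone_perm β
  obtain ⟨hmaj, htot⟩ := h
  have hta : ∑ i, (α ∘ πa) i = ∑ i, α i := Equiv.sum_comp πa α
  have htb : ∑ i, (β ∘ πb) i = ∑ i, β i := Equiv.sum_comp πb β
  have hps : ∀ m : ℕ, HornAux.psum (α ∘ πa) m ≤ HornAux.psum (β ∘ πb) m := by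
    intro m
    rcases le_or_gt m n with hm | hm
    · rw [← HornAux.kLargestSum_eq α πa hπa hm, ← HornAux.kLargestSum_eq β πb hπb hm]
      exact hmaj m hm
    · rw [HornAux.psum_of_ge _ (by omega), HornAux.psum_of_ge _ (by omega), hta, htb, htot]
  have hsum : ∑ i, (α ∘ πa) i = ∑ i, (β ∘ πb) i := by rw [hta, htb, htot]
  obtain ⟨U, hUorth, hUdiag⟩ := HornAux.key n (α ∘ πa) (β ∘ πb) hπa hπb hps hsum
  set U₂ : Matrix (Fin n) (Fin n) ℝ := U.submatrix ⇑πa.symm id with hU2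
  have hsub1 : (1 : Matrix (Fin n) (Fin n) ℝ).submatrix ⇑πa.symm ⇑πa.symm = 1 := by
    ext i j
    simp [Matrix.submatrix_apply, Matrix.one_apply, πa.symm.injective.eq_iff]
  have hU2orth : U₂ * U₂ᵀ = 1 := by
    rw [hU2, Matrix.transpose_submatrix]
    have h := Matrix.submatrix_mul_equiv U Uᵀ (⇑πa.symm) (Equiv.refl (Fin n)) (⇑πa.symm)
    simp only [Equiv.coe_refl] at h
    rw [h, hUorth, hsub1]
  set B := U₂ * Matrix.diagonal (β ∘ πb) * U₂ᵀ with hB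
  have hBdecomp : B = (U * Matrix.diagonal (β ∘ πb) * Uᵀ).submatrix ⇑πa.symm ⇑πa.symm := by
    rw [hB, hU2, Matrix.transpose_submatrix]
    have e1 := Matrix.submatrix_mul_equiv U (Matrix.diagonal (β ∘ πb))
      (⇑πa.symm) (Equiv.refl (Fin n)) id
    simp only [Equiv.coe_refl, Matrix.submatrix_id_id] at e1
    have e2 := Matrix.submatrix_mul_equiv (U * Matrix.diagonal (β ∘ πb)) Uᵀ
      (⇑πa.symm) (Equiv.refl (Fin n)) (⇑πa.symm)
    simp only [Equiv.coe_refl] at e2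
    rw [e1, e2]
  have hBdiag : ∀ i, B i i = α i := by
    intro i
    rw [hBdecomp, Matrix.submatrix_apply, hUdiag (πa.symm i)]
    simp
  have hBsymm : Bᵀ = B := by
    rw [hB, Matrix.transpose_mul, Matrix.transpose_mul, Matrix.transpose_transpose,
      Matrix.diagonal_transpose, ← Matrix.mul_assoc]
  set A : Matrix (Fin n) (Fin n) ℂ := B.map Complex.ofRealHom with hA'
  have hAH : A.IsHermitian := by
    rw [Matrix.IsHermitian]
    ext i j
    rw [Matrix.conjTranspose_apply, hA', Matrix.map_apply, Matrix.map_apply]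
    have hsym2 : B j i = B i j := by
      have := congrFun (congrFun hBsymm i) j
      rw [Matrix.transpose_apply] at this
      exact this
    rw [hsym2]
    simp [Complex.conj_ofReal]
  have hT : (U₂.map Complex.ofRealHom)ᴴ = U₂ᵀ.map Complex.ofRealHom := by
    ext i j
    simp [Matrix.conjTranspose_apply, Matrix.map_apply, Matrix.transpose_apply,
      Complex.conj_ofReal]
  have hW : A = (U₂.map Complex.ofRealHom) * Matrix.diagonal (fun i => (((β ∘ πb) i : ℝ) : ℂ))
      * (U₂.map Complex.ofRealHom)ᴴ := by
    rw [hA', hB, hT]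
    rw [Matrix.map_mul (f := Complex.ofRealHom), Matrix.map_mul (f := Complex.ofRealHom)]
    congr 1
    congr 1
    rw [Matrix.diagonal_map (by simp)]
    rfl
  have hWunit : (U₂.map Complex.ofRealHom) * (U₂.map Complex.ofRealHom)ᴴ = 1 := by
    rw [hT, ← Matrix.map_mul (f := Complex.ofRealHom), hU2orth]
    exact Matrix.map_one _ (by simp) (by simp)
  have hmult := HornAux.eig_multiset hAH hWunit (β ∘ πb) hW
  have hmb : Finset.univ.val.map (β ∘ πb) = Finset.univ.val.map β := by
    have h1 : Multiset.map (β ∘ πb) Finset.univ.val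
        = Multiset.map β (Multiset.map (⇑πb) Finset.univ.val) := by
      rw [Multiset.map_map]
    have h2 : Multiset.map (⇑πb) Finset.univ.val = Finset.univ.val := by
      have h4 := congrArg Finset.val (Finset.map_univ_equiv πb)
      rw [Finset.map_val] at h4
      simpa using h4
    rw [h1, h2]
  obtain ⟨σ, hσ⟩ := HornAux.exists_perm_of_multiset_eq (hmult.trans hmb)
  refine ⟨A, hAH, fun i => ?_, ⟨σ, hσ⟩⟩
  rw [hA', Matrix.map_apply, hBdiag i]
  rfl
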